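/- Let R = ℤ[η,d]/(2η, d² - ηd) be the quotient of the polynomial ring ℤ[η,d] by the ideal generated by 2η and d² - ηd, graded with η and d in degree 1. Then the degree-0 component of R is isomorphic to ℤ, the degree-1 component is isomorphic to ℤ/2 ⊕ ℤ (generated by η and d), and for every n ≥ 2 the degree-n component is isomorphic to ℤ/2 ⊕ ℤ/2 (generated by ηⁿ and η^{n-1}d). -/

import Mathlib

noncomputable section

open MvPolynomial

/-- The ideal (2η, d² - ηd) in ℤ[η,d], where η = X 0 and d = X 1. -/
abbrev Ieta : Ideal (MvPolynomial (Fin 2) ℤ) :=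
  Ideal.span {2 * X 0, (X 1) ^ 2 - X 0 * X 1}

/-- The ring R = ℤ[η,d]/(2η, d² - ηd). -/
abbrev R : Type := MvPolynomial (Fin 2) ℤ ⧸ Ieta

/-- The image of η in R. -/
def η : R := Ideal.Quotient.mk Ieta (X 0)

/-- The image of d in R. -/
def d : R := Ideal.Quotient.mk Ieta (X 1)


/-- The quotient map as a ℤ-linear map. -/
def q : MvPolynomial (Fin 2) ℤ →ₗ[ℤ] R := (Ideal.Quotient.mkₐ ℤ Ieta).toLinearMap

/-- The degree-n homogeneous component of R, i.e. the image in R of the homogeneous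
polynomials of degree n (η and d both have degree 1). -/
def comp (n : ℕ) : Submodule ℤ R := (homogeneousSubmodule (Fin 2) ℤ n).map q

lemma mem_comp {n : ℕ} {p : MvPolynomial (Fin 2) ℤ} (hp : p.IsHomogeneous n) :
    Ideal.Quotient.mk Ieta p ∈ comp n :=
  ⟨p, (mem_homogeneousSubmodule _ _).mpr hp, rfl⟩

lemma eta_mem : η ∈ comp 1 := mem_comp (isHomogeneous_X ℤ 0)

lemma d_mem : d ∈ comp 1 := mem_comp (isHomogeneous_X ℤ 1)

lemma eta_pow_mem (n : ℕ) : η ^ n ∈ comp n := by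
  have h : ((X 0 : MvPolynomial (Fin 2) ℤ) ^ n).IsHomogeneous n := by
    simpa using (isHomogeneous_X ℤ (0 : Fin 2)).pow n
  simpa [η, map_pow] using mem_comp h

lemma eta_pow_d_mem (n : ℕ) : η ^ (n + 1) * d ∈ comp (n + 2) := by
  have h : ((X 0 : MvPolynomial (Fin 2) ℤ) ^ (n + 1) * X 1).IsHomogeneous (n + 2) := by
    simpa using ((isHomogeneous_X ℤ (0 : Fin 2)).pow (n + 1)).mul (isHomogeneous_X ℤ (1 : Fin 2))
  simpa [η, d, map_pow, map_mul] using mem_comp h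

set_option maxHeartbeats 1000000
set_option synthInstance.maxHeartbeats 400000

/-! ### auxiliary lemmas -/

lemma two_eta : (2 : R) * η = 0 := by
  rw [η, ← map_ofNat (Ideal.Quotient.mk Ieta) 2, ← map_mul]
  exact Ideal.Quotient.eq_zero_iff_mem.mpr (Ideal.subset_span (by simp))

lemma dd : (d : R) * d = η * d := by
  have : Ideal.Quotient.mk Ieta ((X 1) ^ 2 - X 0 * X 1) = 0 :=
    Ideal.Quotient.eq_zero_iff_mem.mpr (Ideal.subset_span (by simp))
  rw [map_sub, sub_eq_zero, pow_two, map_mul, map_mul] at this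
  exact this

lemma d_pow (b : ℕ) : (d : R) ^ (b + 1) = η ^ b * d := by
  induction b with
  | zero => simp
  | succ k ih => rw [pow_succ, ih, mul_assoc, dd, pow_succ]; ring

lemma two_smul_eta_pow (k : ℕ) : (2 : ℤ) • (η ^ (k + 1) : R) = 0 := by
  have h2 : ((2 : ℤ) : R) = (2 : R) := by norm_cast
  rw [zsmul_eq_mul, h2, pow_succ', ← mul_assoc, two_eta, zero_mul]

lemma two_smul_eta_pow_d (k : ℕ) : (2 : ℤ) • (η ^ (k + 1) * d : R) = 0 := by
  have h2 : ((2 : ℤ) : R) = (2 : R) := by norm_cast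
  rw [zsmul_eq_mul, h2, pow_succ', ← mul_assoc, ← mul_assoc, two_eta, zero_mul, zero_mul]

lemma mk_monomial (v : Fin 2 →₀ ℕ) (c : ℤ) :
    Ideal.Quotient.mk Ieta (monomial v c) = c • (η ^ (v 0) * d ^ (v 1)) := by
  have hv : v = Finsupp.single 0 (v 0) + Finsupp.single 1 (v 1) := by
    ext i; fin_cases i <;> simp [Finsupp.single_apply]
  have h : monomial v c = C c * (X 0 ^ (v 0) * X 1 ^ (v 1)) := by
    rw [X_pow_eq_monomial, X_pow_eq_monomial, monomial_mul, one_mul, C_mul_monomial, mul_one,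
      ← hv]
  rw [h, map_mul, map_mul]
  rw [show Ideal.Quotient.mk Ieta (C c) = (c : R) from rfl]
  rw [zsmul_eq_mul, η, d, map_pow, map_pow]

lemma hom_deg {p : MvPolynomial (Fin 2) ℤ} {n : ℕ} (hp : p.IsHomogeneous n)
    {v : Fin 2 →₀ ℕ} (hv : coeff v p ≠ 0) : v 0 + v 1 = n := by
  have h := hp hv
  simp [Finsupp.weight, Finsupp.linearCombination, Finsupp.sum] at h
  rw [← h, Finset.sum_subset (Finset.subset_univ v.support)]
  · exact (Fin.sum_univ_two v).symm
  · intro i _ hi; simpa using hi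

/-- Generation of the components of positive degree. -/
lemma comp_succ_gen (m : ℕ) {x : R} (hx : x ∈ comp (m + 1)) :
    ∃ A B : ℤ, x = A • (η ^ (m + 1)) + B • (η ^ m * d) := by
  have hspan : x ∈ Submodule.span ℤ {(η ^ (m + 1) : R), η ^ m * d} := by
    obtain ⟨p, hp, rfl⟩ := hx
    have hph : p.IsHomogeneous (m + 1) := (mem_homogeneousSubmodule _ _).mp hp
    have hq : (q p : R) = ∑ v ∈ p.support, Ideal.Quotient.mk Ieta (monomial v (coeff v p)) := by
      rw [show (q p : R) = Ideal.Quotient.mk Ieta p from rfl]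
      conv_lhs => rw [p.as_sum]
      rw [map_sum]
    rw [hq]
    apply Submodule.sum_mem
    intro v hv
    rw [mk_monomial]
    apply Submodule.smul_mem
    have hdeg : v 0 + v 1 = m + 1 := hom_deg hph (mem_support_iff.mp hv)
    rcases Nat.eq_zero_or_eq_succ_pred (v 1) with h1 | h1
    · have h0 : v 0 = m + 1 := by omega
      rw [h1, h0, pow_zero, mul_one]
      exact Submodule.subset_span (by simp)
    · rw [h1, d_pow, ← mul_assoc, ← pow_add]
      have h2 : v 0 + (v 1).pred = m := by omega
      rw [h2]
      exact Submodule.subset_span (by simp)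
  obtain ⟨a, b, h⟩ := Submodule.mem_span_pair.mp hspan
  exact ⟨a, b, h.symm⟩

lemma comp_zero_gen {x : R} (hx : x ∈ comp 0) : ∃ A : ℤ, x = A • 1 := by
  obtain ⟨p, hp, rfl⟩ := hx
  have hph : p.IsHomogeneous 0 := (mem_homogeneousSubmodule _ _).mp hp
  have hq : (q p : R) = ∑ v ∈ p.support, Ideal.Quotient.mk Ieta (monomial v (coeff v p)) := by
    rw [show (q p : R) = Ideal.Quotient.mk Ieta p from rfl]
    conv_lhs => rw [p.as_sum]
    rw [map_sum]
  have hmem : (q p : R) ∈ Submodule.span ℤ {(1 : R)} := by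
    rw [hq]
    apply Submodule.sum_mem
    intro v hv
    rw [mk_monomial]
    apply Submodule.smul_mem
    have hdeg : v 0 + v 1 = 0 := hom_deg hph (mem_support_iff.mp hv)
    have h0 : v 0 = 0 := by omega
    have h1 : v 1 = 0 := by omega
    rw [h0, h1, pow_zero, pow_zero, mul_one]
    exact Submodule.subset_span (by simp)
  obtain ⟨a, h⟩ := Submodule.mem_span_singleton.mp hmem
  exact ⟨a, h.symm⟩

/-! ### ring homomorphisms out of R -/

lemma ker_helper {S : Type} [CommRing S] (f : MvPolynomial (Fin 2) ℤ →+* S)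
    (h1 : f (2 * X 0) = 0) (h2 : f ((X 1) ^ 2 - X 0 * X 1) = 0) :
    ∀ a ∈ Ieta, f a = 0 := by
  intro a ha
  obtain ⟨u, v, huv⟩ := Ideal.mem_span_pair.mp ha
  rw [← huv, map_add, map_mul f u, map_mul f v, h1, h2, mul_zero, mul_zero, add_zero]

lemma two_pz : (2 : Polynomial (ZMod 2)) = 0 := by
  have h : (2 : Polynomial (ZMod 2)) = Polynomial.C 2 := by norm_cast
  rw [h, show (2 : ZMod 2) = 0 by decide, map_zero]

def ψA : MvPolynomial (Fin 2) ℤ →ₐ[ℤ] Polynomial (ZMod 2) := aeval (fun _ => Polynomial.X)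
def ψB : MvPolynomial (Fin 2) ℤ →ₐ[ℤ] Polynomial (ZMod 2) :=
  aeval (fun i => if i = 0 then Polynomial.X else 0)
def ψD : MvPolynomial (Fin 2) ℤ →ₐ[ℤ] DualNumber ℤ :=
  aeval (fun i => if i = 0 then 0 else DualNumber.eps)
def ψZ : MvPolynomial (Fin 2) ℤ →ₐ[ℤ] ℤ := aeval (fun _ => 0)

def φA : R →+* Polynomial (ZMod 2) :=
  Ideal.Quotient.lift Ieta ψA.toRingHom (ker_helper ψA.toRingHom
    (by simp [ψA, two_pz]) (by simp [ψA, sq]))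
def φB : R →+* Polynomial (ZMod 2) :=
  Ideal.Quotient.lift Ieta ψB.toRingHom (ker_helper ψB.toRingHom
    (by simp [ψB, two_pz]) (by simp [ψB, sq]))
def φD : R →+* DualNumber ℤ :=
  Ideal.Quotient.lift Ieta ψD.toRingHom (ker_helper ψD.toRingHom
    (by simp [ψD]) (by simp [ψD, sq, DualNumber.eps_mul_eps]))
def φZ : R →+* ℤ :=
  Ideal.Quotient.lift Ieta ψZ.toRingHom (ker_helper ψZ.toRingHom
    (by simp [ψZ]) (by simp [ψZ]))

lemma φA_eta : φA η = Polynomial.X := by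
  show ψA (X 0) = _; simp [ψA]
lemma φA_d : φA d = Polynomial.X := by
  show ψA (X 1) = _; simp [ψA]
lemma φB_eta : φB η = Polynomial.X := by
  show ψB (X 0) = _; simp [ψB]
lemma φB_d : φB d = 0 := by
  show ψB (X 1) = _; simp [ψB]
lemma φD_eta : φD η = 0 := by
  show ψD (X 0) = _; simp [ψD]
lemma φD_d : φD d = DualNumber.eps := by
  show ψD (X 1) = _; simp [ψD]
lemma φZ_one : φZ (1 : R) = 1 := map_one _

lemma φA_eta_pow (k : ℕ) : φA (η ^ k) = Polynomial.X ^ k := by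
  rw [map_pow, φA_eta]
lemma φA_eta_pow_d (k : ℕ) : φA (η ^ k * d) = Polynomial.X ^ (k + 1) := by
  rw [map_mul, map_pow, φA_eta, φA_d, pow_succ]
lemma φB_eta_pow (k : ℕ) : φB (η ^ k) = Polynomial.X ^ k := by
  rw [map_pow, φB_eta]
lemma φB_eta_pow_d (k : ℕ) : φB (η ^ k * d) = 0 := by
  rw [map_mul, φB_d, mul_zero]

/-! ### additive maps to the targets -/

def F2 (k : ℕ) : R →+ ZMod 2 × ZMod 2 where
  toFun x := ((φB x).coeff k, (φA x).coeff k - (φB x).coeff k)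
  map_zero' := by simp
  map_add' x y := by
    simp only [map_add, Polynomial.coeff_add, Prod.mk_add_mk, Prod.mk.injEq]
    exact ⟨trivial, by ring⟩

def F1 : R →+ ZMod 2 × ℤ where
  toFun x := ((φB x).coeff 1, (φD x).snd)
  map_zero' := by simp
  map_add' x y := by
    simp only [map_add, Polynomial.coeff_add, TrivSqZeroExt.snd_add, Prod.mk_add_mk]

lemma F2_eta_pow (k : ℕ) : F2 k (η ^ k) = (1, 0) := by
  simp [F2, φA_eta_pow, φB_eta_pow, Polynomial.coeff_X_pow]
lemma F2_eta_pow_d (k : ℕ) : F2 (k + 1) (η ^ k * d) = (0, 1) := by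
  simp [F2, φA_eta_pow_d, φB_eta_pow_d, Polynomial.coeff_X_pow]
lemma F1_eta : F1 η = (1, 0) := by
  simp [F1, φB_eta, φD_eta]
lemma F1_d : F1 d = (0, 1) := by
  simp [F1, φB_d, φD_d]


/-- With η and d in degree 1, the degree-0 component of R = ℤ[η,d]/(2η, d² - ηd) is ℤ,
the degree-1 component is ℤ/2 ⊕ ℤ generated by η and d, and for n ≥ 2 the degree-n component
is ℤ/2 ⊕ ℤ/2 generated by ηⁿ and η^{n-1}·d. -/
theorem stmt0 :
    Nonempty (comp 0 ≃+ ℤ) ∧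
    (∃ e : comp 1 ≃+ (ZMod 2 × ℤ),
      e ⟨η, eta_mem⟩ = (1, 0) ∧ e ⟨d, d_mem⟩ = (0, 1)) ∧
    ∀ n : ℕ, ∃ e : comp (n + 2) ≃+ (ZMod 2 × ZMod 2),
      e ⟨η ^ (n + 2), eta_pow_mem (n + 2)⟩ = (1, 0) ∧
      e ⟨η ^ (n + 1) * d, eta_pow_d_mem n⟩ = (0, 1) := by
  refine ⟨?_, ?_, ?_⟩
  · -- degree 0
    set G : comp 0 →+ ℤ := φZ.toAddMonoidHom.comp (comp 0).subtype.toAddMonoidHom with hG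
    have hone : (1 : R) ∈ comp 0 := by
      refine ⟨1, ?_, map_one (Ideal.Quotient.mkₐ ℤ Ieta)⟩
      exact (mem_homogeneousSubmodule _ _).mpr (isHomogeneous_one _ _)
    have hbij : Function.Bijective G := by
      constructor
      · refine (injective_iff_map_eq_zero G).mpr ?_
        rintro ⟨r, hr⟩ h
        obtain ⟨A, rfl⟩ := comp_zero_gen hr
        have : A • φZ (1 : R) = 0 := by
          rw [← map_zsmul φZ A (1 : R)]; exact h
        rw [φZ_one, smul_eq_mul, mul_one] at this
        subst this
        exact Subtype.ext (by simp)
      · intro A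
        refine ⟨⟨A • 1, Submodule.smul_mem _ _ hone⟩, ?_⟩
        show φZ (A • (1 : R)) = A
        rw [map_zsmul φZ A (1 : R), φZ_one, smul_eq_mul, mul_one]
    exact ⟨AddEquiv.ofBijective G hbij⟩
  · -- degree 1
    set G : comp 1 →+ ZMod 2 × ℤ := F1.comp (comp 1).subtype.toAddMonoidHom with hG
    have hbij : Function.Bijective G := by
      constructor
      · refine (injective_iff_map_eq_zero G).mpr ?_
        rintro ⟨r, hr⟩ h
        obtain ⟨A, B, rfl⟩ := comp_succ_gen 0 hr
        have hval : A • F1 (η ^ 1) + B • F1 (η ^ 0 * d) = 0 := by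
          rw [← map_zsmul F1, ← map_zsmul F1, ← map_add]; exact h
        rw [pow_one, pow_zero, one_mul, F1_eta, F1_d] at hval
        have hA : (A : ZMod 2) = 0 ∧ (B : ℤ) = 0 := by
          have := hval
          simp [Prod.ext_iff] at this
          constructor
          · simpa using this.1
          · simpa using this.2
        obtain ⟨hA2, hB0⟩ := hA
        obtain ⟨A', rfl⟩ := (ZMod.intCast_zmod_eq_zero_iff_dvd A 2).mp hA2
        refine Subtype.ext ?_
        show ((2 : ℤ) * A') • (η ^ 1) + B • (η ^ 0 * d) = (0 : R)
        rw [hB0, zero_smul, add_zero, mul_comm, mul_smul, two_smul_eta_pow 0, smul_zero]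
      · rintro ⟨u, b⟩
        refine ⟨⟨(ZMod.cast u : ℤ) • η + b • d,
          Submodule.add_mem _ (Submodule.smul_mem _ _ eta_mem) (Submodule.smul_mem _ _ d_mem)⟩, ?_⟩
        show F1 ((ZMod.cast u : ℤ) • η + b • d) = (u, b)
        rw [map_add, map_zsmul, map_zsmul, F1_eta, F1_d]
        simp [Prod.ext_iff, ZMod.intCast_zmod_cast]
    refine ⟨AddEquiv.ofBijective G hbij, ?_, ?_⟩
    · show F1 η = (1, 0); exact F1_eta
    · show F1 d = (0, 1); exact F1_d
  · -- degree n + 2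
    intro n
    set k := n + 2 with hk
    set G : comp k →+ ZMod 2 × ZMod 2 := (F2 k).comp (comp k).subtype.toAddMonoidHom with hG
    have hu : F2 k (η ^ k) = (1, 0) := F2_eta_pow k
    have hv : F2 k (η ^ (n + 1) * d) = (0, 1) := F2_eta_pow_d (n + 1)
    have hbij : Function.Bijective G := by
      constructor
      · refine (injective_iff_map_eq_zero G).mpr ?_
        rintro ⟨r, hr⟩ h
        obtain ⟨A, B, rfl⟩ := comp_succ_gen (n + 1) hr
        have hval : A • F2 k (η ^ k) + B • F2 k (η ^ (n + 1) * d) = 0 := by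
          rw [← map_zsmul (F2 k), ← map_zsmul (F2 k), ← map_add]; exact h
        rw [hu, hv] at hval
        have hAB : (A : ZMod 2) = 0 ∧ (B : ZMod 2) = 0 := by
          simpa [Prod.ext_iff] using hval
        obtain ⟨A', rfl⟩ := (ZMod.intCast_zmod_eq_zero_iff_dvd A 2).mp hAB.1
        obtain ⟨B', rfl⟩ := (ZMod.intCast_zmod_eq_zero_iff_dvd B 2).mp hAB.2
        refine Subtype.ext ?_
        show ((2 : ℤ) * A') • (η ^ (n + 1 + 1)) + ((2 : ℤ) * B') • (η ^ (n + 1) * d) = (0 : R)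
        rw [mul_comm (2 : ℤ) A', mul_comm (2 : ℤ) B', mul_smul, mul_smul,
          two_smul_eta_pow (n + 1), two_smul_eta_pow_d n, smul_zero, smul_zero, add_zero]
      · rintro ⟨u, v⟩
        refine ⟨⟨(ZMod.cast u : ℤ) • η ^ k + (ZMod.cast v : ℤ) • (η ^ (n + 1) * d),
          Submodule.add_mem _ (Submodule.smul_mem _ _ (eta_pow_mem k))
            (Submodule.smul_mem _ _ (eta_pow_d_mem n))⟩, ?_⟩
        show F2 k ((ZMod.cast u : ℤ) • η ^ k + (ZMod.cast v : ℤ) • (η ^ (n + 1) * d)) = (u, v)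
        rw [map_add, map_zsmul, map_zsmul, hu, hv]
        simp [Prod.ext_iff, ZMod.intCast_zmod_cast]
    refine ⟨AddEquiv.ofBijective G hbij, ?_, ?_⟩
    · show F2 k (η ^ k) = (1, 0); exact hu
    · show F2 k (η ^ (n + 1) * d) = (0, 1); exact hv

end
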